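/- Let λ ⊢ n, μ ⊢ m, s a λ-tableau and t a μ-tableau. Then gcd of the coefficients of the product Y_s · Y_{t^{+n}} · Y_{s+t} in ℤS_{n+m} is independent of the choice of s and t (it depends only on λ and μ). -/

import Mathlib

open Finset Equiv MonoidAlgebra

namespace YS

variable {N : ℕ}

/-- The set of entries of a tableau `s` of shape `μ` with values in `Fin N`. -/
def entriesFinset (μ : YoungDiagram) (s : ↥μ.cells → Fin N) : Finset (Fin N) :=
  μ.cells.attach.image s

/-- The entries in row `i` of the tableau `s`. -/
def rowFinset (μ : YoungDiagram) (s : ↥μ.cells → Fin N) (i : ℕ) : Finset (Fin N) :=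
  (μ.cells.attach.filter (fun c => c.val.1 = i)).image s

/-- The entries in column `j` of the tableau `s`. -/
def colFinset (μ : YoungDiagram) (s : ↥μ.cells → Fin N) (j : ℕ) : Finset (Fin N) :=
  (μ.cells.attach.filter (fun c => c.val.2 = j)).image s

/-- The row stabilizer `R_s`: permutations fixing everything outside the entries of `s`
and permuting the entries within each row. -/
def rowStab (μ : YoungDiagram) (s : ↥μ.cells → Fin N) : Finset (Perm (Fin N)) :=
  univ.filter fun σ =>
    (∀ x, x ∉ entriesFinset μ s → σ x = x) ∧
    ∀ i ∈ μ.cells.image Prod.fst, ∀ x ∈ rowFinset μ s i, σ x ∈ rowFinset μ s i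

/-- The column stabilizer `C_s`. -/
def colStab (μ : YoungDiagram) (s : ↥μ.cells → Fin N) : Finset (Perm (Fin N)) :=
  univ.filter fun σ =>
    (∀ x, x ∉ entriesFinset μ s → σ x = x) ∧
    ∀ j ∈ μ.cells.image Prod.snd, ∀ x ∈ colFinset μ s j, σ x ∈ colFinset μ s j

/-- `{S} = ∑_{σ ∈ S} σ` in the integral group algebra. -/
noncomputable def sumElt (S : Finset (Perm (Fin N))) : MonoidAlgebra ℤ (Perm (Fin N)) :=
  ∑ σ ∈ S, MonoidAlgebra.single σ 1

/-- `[S] = ∑_{σ ∈ S} sgn(σ) σ` in the integral group algebra. -/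
noncomputable def altElt (S : Finset (Perm (Fin N))) : MonoidAlgebra ℤ (Perm (Fin N)) :=
  ∑ σ ∈ S, MonoidAlgebra.single σ ((Perm.sign σ : ℤˣ) : ℤ)

/-- The Young symmetrizer `Y_s = {R_s}[C_s]`. -/
noncomputable def youngSym (μ : YoungDiagram) (s : ↥μ.cells → Fin N) :
    MonoidAlgebra ℤ (Perm (Fin N)) :=
  sumElt (rowStab μ s) * altElt (colStab μ s)

/-- The row stabilizer `R_{s+t}` of the combined tableau: row `i` of `s+t` consists of
the entries of row `i` of `s` together with those of row `i` of `t`. -/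
def combRowStab (lam mu : YoungDiagram) (s : ↥lam.cells → Fin N) (t : ↥mu.cells → Fin N) :
    Finset (Perm (Fin N)) :=
  univ.filter fun σ =>
    (∀ x, x ∉ entriesFinset lam s ∪ entriesFinset mu t → σ x = x) ∧
    ∀ i ∈ lam.cells.image Prod.fst ∪ mu.cells.image Prod.fst,
      ∀ x ∈ rowFinset lam s i ∪ rowFinset mu t i, σ x ∈ rowFinset lam s i ∪ rowFinset mu t i

/-- The column stabilizer `C_{s+t} = C_s C_t` of the combined tableau: the columns of `s+t`
are exactly the columns of `s` together with the columns of `t`. -/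
def combColStab (lam mu : YoungDiagram) (s : ↥lam.cells → Fin N) (t : ↥mu.cells → Fin N) :
    Finset (Perm (Fin N)) :=
  univ.filter fun σ =>
    (∀ x, x ∉ entriesFinset lam s ∪ entriesFinset mu t → σ x = x) ∧
    (∀ j ∈ lam.cells.image Prod.snd, ∀ x ∈ colFinset lam s j, σ x ∈ colFinset lam s j) ∧
    (∀ j ∈ mu.cells.image Prod.snd, ∀ x ∈ colFinset mu t j, σ x ∈ colFinset mu t j)

/-- The Young symmetrizer `Y_{s+t}` of the combined tableau `s+t` of shape `λ+μ`. -/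
noncomputable def combYoungSym (lam mu : YoungDiagram) (s : ↥lam.cells → Fin N)
    (t : ↥mu.cells → Fin N) : MonoidAlgebra ℤ (Perm (Fin N)) :=
  sumElt (combRowStab lam mu s t) * altElt (combColStab lam mu s t)

/-- The (nonnegative) gcd of the coefficients of an element of the group algebra. -/
noncomputable def coeffGcd (f : MonoidAlgebra ℤ (Perm (Fin N))) : ℤ :=
  f.coeff.support.gcd f.coeff

end YS

namespace YS

variable {N : ℕ}

lemma mem_image_perm (π : Perm (Fin N)) (E : Finset (Fin N)) (y : Fin N) :
    y ∈ E.image π ↔ π⁻¹ y ∈ E := by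
  simp only [Finset.mem_image]
  constructor
  · rintro ⟨x, hx, rfl⟩; simpa using hx
  · intro h; exact ⟨π⁻¹ y, h, by simp⟩

lemma cond_fix_iff (π σ : Perm (Fin N)) (E : Finset (Fin N)) :
    (∀ x, x ∉ E.image π → σ x = x) ↔ (∀ x, x ∉ E → (π⁻¹ * σ * π) x = x) := by
  constructor
  · intro h x hx
    have hmem : π x ∉ E.image π := by rw [mem_image_perm]; simpa using hx
    have := h (π x) hmem
    simp [Perm.mul_apply, this]
  · intro h x hx
    have hx' : π⁻¹ x ∉ E := by rwa [mem_image_perm] at hx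
    have h2 := h _ hx'
    simp only [Perm.mul_apply, (show ∀ y, π (π⁻¹ y) = y from fun y => by simp)] at h2
    exact (Equiv.apply_eq_iff_eq π⁻¹).mp h2

lemma cond_stab_iff (π σ : Perm (Fin N)) (R : Finset (Fin N)) :
    (∀ x ∈ R.image π, σ x ∈ R.image π) ↔ (∀ x ∈ R, (π⁻¹ * σ * π) x ∈ R) := by
  constructor
  · intro h x hx
    have h2 := h (π x) (Finset.mem_image_of_mem _ hx)
    rw [mem_image_perm] at h2
    simpa [Perm.mul_apply] using h2
  · intro h x hx
    rw [mem_image_perm] at hx ⊢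
    have h2 := h _ hx
    simpa [Perm.mul_apply] using h2

lemma entriesFinset_comp (μ : YoungDiagram) (s : ↥μ.cells → Fin N) (π : Perm (Fin N)) :
    entriesFinset μ (fun c => π (s c)) = (entriesFinset μ s).image π := by
  unfold entriesFinset
  rw [Finset.image_image]
  rfl

lemma rowFinset_comp (μ : YoungDiagram) (s : ↥μ.cells → Fin N) (π : Perm (Fin N)) (i : ℕ) :
    rowFinset μ (fun c => π (s c)) i = (rowFinset μ s i).image π := by
  unfold rowFinset
  rw [Finset.image_image]
  rfl

lemma colFinset_comp (μ : YoungDiagram) (s : ↥μ.cells → Fin N) (π : Perm (Fin N)) (j : ℕ) :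
    colFinset μ (fun c => π (s c)) j = (colFinset μ s j).image π := by
  unfold colFinset
  rw [Finset.image_image]
  rfl

lemma conj_injective (π : Perm (Fin N)) :
    Function.Injective (fun σ : Perm (Fin N) => π * σ * π⁻¹) := by
  intro a b h
  have ha : π⁻¹ * (π * a * π⁻¹) * π = a := by group
  have hb : π⁻¹ * (π * b * π⁻¹) * π = b := by group
  rw [← ha, ← hb]
  simp only at h
  rw [h]

lemma filter_conj_eq (π : Perm (Fin N)) (p q : Perm (Fin N) → Prop)
    [DecidablePred p] [DecidablePred q]
    (h : ∀ σ, q σ ↔ p (π⁻¹ * σ * π)) :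
    univ.filter q = (univ.filter p).image (fun σ => π * σ * π⁻¹) := by
  ext σ
  simp only [Finset.mem_filter, Finset.mem_univ, true_and, Finset.mem_image]
  rw [h]
  constructor
  · intro hp; exact ⟨π⁻¹ * σ * π, hp, by group⟩
  · rintro ⟨τ, hτ, rfl⟩
    have : π⁻¹ * (π * τ * π⁻¹) * π = τ := by group
    rw [this]; exact hτ

lemma rowStab_conj (μ : YoungDiagram) (s s' : ↥μ.cells → Fin N) (π : Perm (Fin N))
    (h : ∀ c, π (s c) = s' c) :
    rowStab μ s' = (rowStab μ s).image (fun σ => π * σ * π⁻¹) := by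
  have hs' : s' = fun c => π (s c) := funext fun c => (h c).symm
  subst hs'
  unfold rowStab
  apply filter_conj_eq
  intro σ
  simp only [entriesFinset_comp, rowFinset_comp]
  exact and_congr (cond_fix_iff π σ _) (forall₂_congr fun i _ => cond_stab_iff π σ _)

lemma colStab_conj (μ : YoungDiagram) (s s' : ↥μ.cells → Fin N) (π : Perm (Fin N))
    (h : ∀ c, π (s c) = s' c) :
    colStab μ s' = (colStab μ s).image (fun σ => π * σ * π⁻¹) := by
  have hs' : s' = fun c => π (s c) := funext fun c => (h c).symm
  subst hs'
  unfold colStab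
  apply filter_conj_eq
  intro σ
  simp only [entriesFinset_comp, colFinset_comp]
  exact and_congr (cond_fix_iff π σ _) (forall₂_congr fun j _ => cond_stab_iff π σ _)

lemma combRowStab_conj (lam mu : YoungDiagram) (s s' : ↥lam.cells → Fin N)
    (t t' : ↥mu.cells → Fin N) (π : Perm (Fin N))
    (h1 : ∀ c, π (s c) = s' c) (h2 : ∀ c, π (t c) = t' c) :
    combRowStab lam mu s' t' = (combRowStab lam mu s t).image (fun σ => π * σ * π⁻¹) := by
  have hs' : s' = fun c => π (s c) := funext fun c => (h1 c).symm
  have ht' : t' = fun c => π (t c) := funext fun c => (h2 c).symm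
  subst hs'; subst ht'
  unfold combRowStab
  apply filter_conj_eq
  intro σ
  simp only [entriesFinset_comp, rowFinset_comp, ← Finset.image_union]
  exact and_congr (cond_fix_iff π σ _) (forall₂_congr fun i _ => cond_stab_iff π σ _)

lemma combColStab_conj (lam mu : YoungDiagram) (s s' : ↥lam.cells → Fin N)
    (t t' : ↥mu.cells → Fin N) (π : Perm (Fin N))
    (h1 : ∀ c, π (s c) = s' c) (h2 : ∀ c, π (t c) = t' c) :
    combColStab lam mu s' t' = (combColStab lam mu s t).image (fun σ => π * σ * π⁻¹) := by
  have hs' : s' = fun c => π (s c) := funext fun c => (h1 c).symm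
  have ht' : t' = fun c => π (t c) := funext fun c => (h2 c).symm
  subst hs'; subst ht'
  unfold combColStab
  apply filter_conj_eq
  intro σ
  simp only [entriesFinset_comp, colFinset_comp, ← Finset.image_union]
  exact and_congr (cond_fix_iff π σ _)
    (and_congr (forall₂_congr fun j _ => cond_stab_iff π σ _)
      (forall₂_congr fun j _ => cond_stab_iff π σ _))

lemma sumElt_conj (π : Perm (Fin N)) (S : Finset (Perm (Fin N))) :
    sumElt (S.image (fun σ => π * σ * π⁻¹)) =
      MonoidAlgebra.single π 1 * sumElt S * MonoidAlgebra.single π⁻¹ 1 := by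
  unfold sumElt
  rw [Finset.sum_image (fun a _ b _ h => conj_injective π h), Finset.mul_sum, Finset.sum_mul]
  refine Finset.sum_congr rfl fun σ _ => ?_
  rw [MonoidAlgebra.single_mul_single, MonoidAlgebra.single_mul_single]
  simp

lemma altElt_conj (π : Perm (Fin N)) (S : Finset (Perm (Fin N))) :
    altElt (S.image (fun σ => π * σ * π⁻¹)) =
      MonoidAlgebra.single π 1 * altElt S * MonoidAlgebra.single π⁻¹ 1 := by
  unfold altElt
  rw [Finset.sum_image (fun a _ b _ h => conj_injective π h)]
  rw [Finset.mul_sum, Finset.sum_mul]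
  refine Finset.sum_congr rfl fun σ _ => ?_
  rw [MonoidAlgebra.single_mul_single, MonoidAlgebra.single_mul_single]
  have hsgn : Perm.sign (π * σ * π⁻¹) = Perm.sign σ := by
    simp only [map_mul, map_inv]
    rw [mul_comm (Perm.sign π) (Perm.sign σ), mul_assoc]
    simp
  rw [hsgn]
  ring_nf

lemma youngSym_conj (μ : YoungDiagram) (s s' : ↥μ.cells → Fin N) (π : Perm (Fin N))
    (h : ∀ c, π (s c) = s' c) :
    youngSym μ s' = MonoidAlgebra.single π 1 * youngSym μ s * MonoidAlgebra.single π⁻¹ 1 := by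
  unfold youngSym
  rw [rowStab_conj μ s s' π h, colStab_conj μ s s' π h, sumElt_conj, altElt_conj]
  have hone : (MonoidAlgebra.single (π⁻¹ : Perm (Fin N)) (1 : ℤ)) *
      MonoidAlgebra.single π 1 = 1 := by
    rw [MonoidAlgebra.single_mul_single]
    simp [MonoidAlgebra.one_def]
  simp only [mul_assoc]
  rw [← mul_assoc (MonoidAlgebra.single π⁻¹ 1) (MonoidAlgebra.single π 1), hone, one_mul]

lemma combYoungSym_conj (lam mu : YoungDiagram) (s s' : ↥lam.cells → Fin N)
    (t t' : ↥mu.cells → Fin N) (π : Perm (Fin N))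
    (h1 : ∀ c, π (s c) = s' c) (h2 : ∀ c, π (t c) = t' c) :
    combYoungSym lam mu s' t' =
      MonoidAlgebra.single π 1 * combYoungSym lam mu s t * MonoidAlgebra.single π⁻¹ 1 := by
  unfold combYoungSym
  rw [combRowStab_conj lam mu s s' t t' π h1 h2, combColStab_conj lam mu s s' t t' π h1 h2,
    sumElt_conj, altElt_conj]
  have hone : (MonoidAlgebra.single (π⁻¹ : Perm (Fin N)) (1 : ℤ)) *
      MonoidAlgebra.single π 1 = 1 := by
    rw [MonoidAlgebra.single_mul_single]
    simp [MonoidAlgebra.one_def]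
  simp only [mul_assoc]
  rw [← mul_assoc (MonoidAlgebra.single π⁻¹ 1) (MonoidAlgebra.single π 1), hone, one_mul]

lemma coeffGcd_conj (π : Perm (Fin N)) (f : MonoidAlgebra ℤ (Perm (Fin N))) :
    coeffGcd (MonoidAlgebra.single π 1 * f * MonoidAlgebra.single π⁻¹ 1) = coeffGcd f := by
  set g := MonoidAlgebra.single π 1 * f * MonoidAlgebra.single π⁻¹ 1 with hg
  have hco : ∀ x, g.coeff x = f.coeff (π⁻¹ * x * π) := by
    intro x
    rw [hg, MonoidAlgebra.coeff_mul_single_apply, MonoidAlgebra.coeff_single_mul_apply]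
    simp [mul_assoc]
  have hsupp : g.coeff.support = f.coeff.support.image (fun σ => π * σ * π⁻¹) := by
    ext x
    simp only [Finsupp.mem_support_iff, Finset.mem_image, hco]
    constructor
    · intro h
      exact ⟨π⁻¹ * x * π, h, by group⟩
    · rintro ⟨σ, hσ, rfl⟩
      have : π⁻¹ * (π * σ * π⁻¹) * π = σ := by group
      rw [this]; exact hσ
  unfold coeffGcd
  rw [hsupp, Finset.gcd_image]
  refine Finset.gcd_congr rfl fun σ _ => ?_
  show g.coeff (π * σ * π⁻¹) = f.coeff σ
  rw [hco]
  congr 1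
  group

end YS

open YS Finset in
/-- The gcd `θ_{λ,μ}` of the coefficients of `Y_s Y_{t^{+n}} Y_{s+t}` is independent of the
choice of the `λ`-tableau `s` (with entries `{1,…,n}`) and `μ`-tableau `t`
(with entries `{n+1,…,n+m}`). -/
theorem coeffGcd_youngSym_product_independent (n m : ℕ) (lam mu : YoungDiagram)
    (hlam : lam.card = n) (hmu : mu.card = m)
    (s s' : ↥lam.cells → Fin (n + m)) (t t' : ↥mu.cells → Fin (n + m))
    (hs : Function.Injective s) (hs' : Function.Injective s')
    (ht : Function.Injective t) (ht' : Function.Injective t')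
    (hsval : entriesFinset lam s = univ.filter (fun x : Fin (n + m) => (x : ℕ) < n))
    (hs'val : entriesFinset lam s' = univ.filter (fun x : Fin (n + m) => (x : ℕ) < n))
    (htval : entriesFinset mu t = univ.filter (fun x : Fin (n + m) => n ≤ (x : ℕ)))
    (ht'val : entriesFinset mu t' = univ.filter (fun x : Fin (n + m) => n ≤ (x : ℕ))) :
    coeffGcd (youngSym lam s * youngSym mu t * combYoungSym lam mu s t) =
      coeffGcd (youngSym lam s' * youngSym mu t' * combYoungSym lam mu s' t') := by
  classical
  have hcardlam : Fintype.card ↥lam.cells = n := by rw [Fintype.card_coe]; exact hlam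
  have hcardmu : Fintype.card ↥mu.cells = m := by rw [Fintype.card_coe]; exact hmu
  have hmemS : ∀ (u : ↥lam.cells → Fin (n + m)),
      entriesFinset lam u = univ.filter (fun x : Fin (n + m) => (x : ℕ) < n) →
      ∀ c, ((u c : Fin (n + m)) : ℕ) < n := by
    intro u hu c
    have h1 : u c ∈ entriesFinset lam u := Finset.mem_image_of_mem u (Finset.mem_attach _ c)
    rw [hu] at h1
    exact (Finset.mem_filter.mp h1).2
  have hmemT : ∀ (u : ↥mu.cells → Fin (n + m)),
      entriesFinset mu u = univ.filter (fun x : Fin (n + m) => n ≤ (x : ℕ)) →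
      ∀ c, n ≤ ((u c : Fin (n + m)) : ℕ) := by
    intro u hu c
    have h1 : u c ∈ entriesFinset mu u := Finset.mem_image_of_mem u (Finset.mem_attach _ c)
    rw [hu] at h1
    exact (Finset.mem_filter.mp h1).2
  have hbij : ∀ (u : ↥lam.cells → Fin (n + m)) (v : ↥mu.cells → Fin (n + m)),
      Function.Injective u → Function.Injective v →
      (∀ c, ((u c : Fin (n + m)) : ℕ) < n) → (∀ c, n ≤ ((v c : Fin (n + m)) : ℕ)) →
      Function.Bijective (Sum.elim u v) := by
    intro u v hu hv h1 h2
    have hinj : Function.Injective (Sum.elim u v) := by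
      intro a b hab
      cases a with
      | inl a =>
        cases b with
        | inl b => exact congrArg Sum.inl (hu hab)
        | inr b =>
          exfalso
          have hcontra : u a = v b := hab
          have h3 := h1 a
          rw [hcontra] at h3
          exact absurd h3 (not_lt.mpr (h2 b))
      | inr a =>
        cases b with
        | inl b =>
          exfalso
          have hcontra : v a = u b := hab
          have h3 := h1 b
          rw [← hcontra] at h3
          exact absurd h3 (not_lt.mpr (h2 a))
        | inr b => exact congrArg Sum.inr (hv hab)
    rw [Fintype.bijective_iff_injective_and_card]
    refine ⟨hinj, ?_⟩
    simp [Fintype.card_sum, hcardlam, hcardmu]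
  let e : (↥lam.cells ⊕ ↥mu.cells) ≃ Fin (n + m) :=
    Equiv.ofBijective _ (hbij s t hs ht (hmemS s hsval) (hmemT t htval))
  let e' : (↥lam.cells ⊕ ↥mu.cells) ≃ Fin (n + m) :=
    Equiv.ofBijective _ (hbij s' t' hs' ht' (hmemS s' hs'val) (hmemT t' ht'val))
  let π : Perm (Fin (n + m)) := e.symm.trans e'
  have hπs : ∀ c, π (s c) = s' c := by
    intro c
    show e' (e.symm (s c)) = s' c
    have h1 : s c = e (Sum.inl c) := rfl
    rw [h1, Equiv.symm_apply_apply]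
    rfl
  have hπt : ∀ c, π (t c) = t' c := by
    intro c
    show e' (e.symm (t c)) = t' c
    have h1 : t c = e (Sum.inr c) := rfl
    rw [h1, Equiv.symm_apply_apply]
    rfl
  have key1 := youngSym_conj lam s s' π hπs
  have key2 := youngSym_conj mu t t' π hπt
  have key3 := combYoungSym_conj lam mu s s' t t' π hπs hπt
  have hone : (MonoidAlgebra.single (π⁻¹ : Perm (Fin (n + m))) (1 : ℤ)) *
      MonoidAlgebra.single π 1 = 1 := by
    rw [MonoidAlgebra.single_mul_single]
    simp [MonoidAlgebra.one_def]
  have hprod : ∀ A B C : MonoidAlgebra ℤ (Perm (Fin (n + m))),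
      (MonoidAlgebra.single π 1 * A * MonoidAlgebra.single π⁻¹ 1) *
        (MonoidAlgebra.single π 1 * B * MonoidAlgebra.single π⁻¹ 1) *
        (MonoidAlgebra.single π 1 * C * MonoidAlgebra.single π⁻¹ 1) =
      MonoidAlgebra.single π 1 * (A * B * C) * MonoidAlgebra.single π⁻¹ 1 := by
    intro A B C
    simp only [mul_assoc]
    rw [← mul_assoc (MonoidAlgebra.single π⁻¹ 1) (MonoidAlgebra.single π 1), hone, one_mul,
      ← mul_assoc (MonoidAlgebra.single π⁻¹ 1) (MonoidAlgebra.single π 1), hone, one_mul]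
  rw [key1, key2, key3, hprod, coeffGcd_conj]
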